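/- arXiv:2504.19259 — 3 statements merged into one kernel-verified Lean document; each statement's English description precedes it below -/
import Mathlib

section
/- For every θ ∈ ℝⁿ, the Hessian ∇²ψ(θ) of ψ satisfies 0 ≺ ∇²ψ(θ) ≺ I; that is, ∇²ψ(θ) is positive definite and I − ∇²ψ(θ) is positive definite. -/
open Filter

noncomputable section

abbrev E (n : ℕ) := EuclideanSpace ℝ (Fin n)

/-- The open probability simplex `S_n` inside `ℝ^{n+1}`. -/
def simplex (n : ℕ) : Set (Fin (n+1) → ℝ) :=
  {p | (∀ i, 0 < p i) ∧ ∑ i, p i = 1}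

/-- The mixture (`η`) coordinate domain `Δ_n`. -/
def Δset (n : ℕ) : Set (E n) := {η | (∀ i, 0 < η i) ∧ ∑ i, η i < 1}

/-- The distribution in `S_n` corresponding to `η` coordinates. -/
def mixDist {n : ℕ} (η : E n) : Fin (n+1) → ℝ :=
  Fin.snoc (fun i => η i) (1 - ∑ i, η i)

/-- The distribution in `S_n` corresponding to `θ` coordinates. -/
def expDist {n : ℕ} (θ : E n) : Fin (n+1) → ℝ :=
  Fin.snoc (fun i => Real.exp (θ i) / (1 + ∑ j, Real.exp (θ j)))
    (1 / (1 + ∑ j, Real.exp (θ j)))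

/-- The `η` coordinates of a distribution `q ∈ S_n`. -/
def etaCoord {n : ℕ} (q : Fin (n+1) → ℝ) : E n := WithLp.toLp 2 (fun i => q i.castSucc)

/-- The `θ` coordinates of a distribution `q ∈ S_n`. -/
def thetaCoord {n : ℕ} (q : Fin (n+1) → ℝ) : E n :=
  WithLp.toLp 2 (fun i => Real.log (q i.castSucc / q (Fin.last n)))

/-- Kullback–Leibler divergence `D(q‖p)`. -/
def KL {n : ℕ} (q p : Fin (n+1) → ℝ) : ℝ := ∑ i, q i * Real.log (q i / p i)

/-- Log-partition function `ψ(θ) = log(1 + Σ e^{θ_i})`. -/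
def psi {n : ℕ} (θ : E n) : ℝ := Real.log (1 + ∑ i, Real.exp (θ i))

/-- Negative entropy `φ(η)`. -/
def phi {n : ℕ} (η : E n) : ℝ :=
  (∑ i, η i * Real.log (η i)) + (1 - ∑ i, η i) * Real.log (1 - ∑ i, η i)

/-- The loss `L_q` in `η` coordinates: `η ↦ D(q ‖ p(η))`. -/
def Leta {n : ℕ} (q : Fin (n+1) → ℝ) (η : E n) : ℝ := KL q (mixDist η)

/-- The loss `L_q` in `θ` coordinates: `θ ↦ D(q ‖ p(θ))`. -/
def Ltheta {n : ℕ} (q : Fin (n+1) → ℝ) (θ : E n) : ℝ := KL q (expDist θ)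

/-- The Hessian of `f : ℝⁿ → ℝ` at `x`, as the `n × n` matrix of second partial
derivatives. -/
def hess {n : ℕ} (f : E n → ℝ) (x : E n) : Matrix (Fin n) (Fin n) ℝ :=
  Matrix.of fun i j =>
    fderiv ℝ (fun y => fderiv ℝ f y (EuclideanSpace.single j 1)) x (EuclideanSpace.single i 1)

/-- The set of (real) eigenvalues of a matrix. -/
def lamSet {n : ℕ} (A : Matrix (Fin n) (Fin n) ℝ) : Set ℝ :=
  {μ | ∃ v : Fin n → ℝ, v ≠ 0 ∧ A.mulVec v = μ • v}

/-- Largest eigenvalue `λ_max`. -/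
def lamMax {n : ℕ} (A : Matrix (Fin n) (Fin n) ℝ) : ℝ := sSup (lamSet A)

/-- Smallest eigenvalue `λ_min`. -/
def lamMin {n : ℕ} (A : Matrix (Fin n) (Fin n) ℝ) : ℝ := sInf (lamSet A)

/-- Condition number `cond(A) = λ_max(A)/λ_min(A)`. -/
def condNum {n : ℕ} (A : Matrix (Fin n) (Fin n) ℝ) : ℝ := lamMax A / lamMin A

/-- Operator 2-norm of a matrix (induced by the Euclidean norm). -/
def opNorm {n : ℕ} (A : Matrix (Fin n) (Fin n) ℝ) : ℝ :=
  ‖Matrix.toEuclideanCLM (𝕜 := ℝ) A‖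


section Aux

open Matrix

variable {n : ℕ}

private def Sf (θ : E n) : ℝ := 1 + ∑ i, Real.exp (θ i)

private lemma Sf_pos (θ : E n) : 0 < Sf θ := by
  have h : 0 ≤ ∑ i, Real.exp (θ i) := Finset.sum_nonneg fun i _ => (Real.exp_pos _).le
  unfold Sf; linarith

private lemma proj_apply' (i : Fin n) (v : E n) :
    (EuclideanSpace.proj i : E n →L[ℝ] ℝ) v = v i := rfl

private def SD (θ : E n) : E n →L[ℝ] ℝ :=
  ∑ i, Real.exp (θ i) • (EuclideanSpace.proj i : E n →L[ℝ] ℝ)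

private lemma SD_apply (θ : E n) (j : Fin n) :
    SD θ (EuclideanSpace.single j 1) = Real.exp (θ j) := by
  simp only [SD, ContinuousLinearMap.sum_apply, ContinuousLinearMap.smul_apply,
    proj_apply', EuclideanSpace.single_apply]
  rw [Finset.sum_eq_single j]
  · simp
  · intro b _ hb
    simp [hb]
  · simp

private lemma hasFDerivAt_Sf (x : E n) : HasFDerivAt Sf (SD x) x := by
  have h : HasFDerivAt (fun θ : E n => ∑ i, Real.exp (θ i)) (SD x) x := by
    apply HasFDerivAt.fun_sum
    intro i _
    have h := (Real.hasDerivAt_exp (x i)).comp_hasFDerivAt x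
      (EuclideanSpace.proj i : E n →L[ℝ] ℝ).hasFDerivAt
    exact h
  exact h.const_add 1

private lemma hasFDerivAt_psi (x : E n) :
    HasFDerivAt psi ((Sf x)⁻¹ • SD x) x := by
  have h := (Real.hasDerivAt_log (Sf_pos x).ne').comp_hasFDerivAt x (hasFDerivAt_Sf x)
  exact h

private lemma fderiv_psi_single (y : E n) (j : Fin n) :
    fderiv ℝ psi y (EuclideanSpace.single j 1) = Real.exp (y j) / Sf y := by
  rw [(hasFDerivAt_psi y).fderiv]
  simp [SD_apply, div_eq_inv_mul]

private lemma hasFDerivAt_grad (x : E n) (j : Fin n) :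
    HasFDerivAt (fun y : E n => Real.exp (y j) / Sf y)
      ((Real.exp (x j)) • ((-((Sf x) ^ 2)⁻¹) • SD x)
        + (Sf x)⁻¹ • (Real.exp (x j) • (EuclideanSpace.proj j : E n →L[ℝ] ℝ))) x := by
  have hnum : HasFDerivAt (fun y : E n => Real.exp (y j))
      (Real.exp (x j) • (EuclideanSpace.proj j : E n →L[ℝ] ℝ)) x := by
    have h := (Real.hasDerivAt_exp (x j)).comp_hasFDerivAt x
      (EuclideanSpace.proj j : E n →L[ℝ] ℝ).hasFDerivAt
    exact h
  have hinv : HasFDerivAt (fun y : E n => (Sf y)⁻¹)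
      ((-((Sf x) ^ 2)⁻¹) • SD x) x :=
    (hasDerivAt_inv (Sf_pos x).ne').comp_hasFDerivAt x (hasFDerivAt_Sf x)
  have := hnum.mul hinv
  simp only [div_eq_mul_inv]
  exact this

private lemma hess_psi_apply (x : E n) (i j : Fin n) :
    hess psi x i j = (if i = j then Real.exp (x j) / Sf x else 0)
      - (Real.exp (x i) / Sf x) * (Real.exp (x j) / Sf x) := by
  have hfun : (fun y : E n => fderiv ℝ psi y (EuclideanSpace.single j 1))
      = fun y : E n => Real.exp (y j) / Sf y := funext fun y => fderiv_psi_single y j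
  have key : hess psi x i j
      = fderiv ℝ (fun y : E n => Real.exp (y j) / Sf y) x (EuclideanSpace.single i 1) := by
    simp only [hess, Matrix.of_apply, hfun]
  rw [key, (hasFDerivAt_grad x j).fderiv]
  have hij : (EuclideanSpace.proj j : E n →L[ℝ] ℝ) (EuclideanSpace.single i 1)
      = if i = j then (1 : ℝ) else 0 := by
    simp [EuclideanSpace.single_apply, eq_comm]
  have hS := (Sf_pos x).ne'
  simp only [ContinuousLinearMap.add_apply, ContinuousLinearMap.smul_apply, SD_apply, hij,
    smul_eq_mul]
  by_cases h : i = j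
  · subst h; simp only [if_true]; field_simp; ring
  · simp [h]; field_simp

private lemma quad_form (x : E n) (v : Fin n → ℝ) :
    v ⬝ᵥ (hess psi x) *ᵥ v
      = (∑ i, (Real.exp (x i) / Sf x) * v i ^ 2)
        - (∑ i, (Real.exp (x i) / Sf x) * v i) ^ 2 := by
  set p : Fin n → ℝ := fun i => Real.exp (x i) / Sf x with hp
  have hmv : ∀ i, ((hess psi x) *ᵥ v) i = p i * v i - p i * ∑ j, p j * v j := by
    intro i
    simp only [Matrix.mulVec, dotProduct, hess_psi_apply, sub_mul, Finset.sum_sub_distrib]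
    congr 1
    · rw [Finset.sum_eq_single i]
      · simp [hp]
      · intro b _ hb; simp [Ne.symm hb]
      · simp
    · rw [Finset.mul_sum]
      congr 1; funext j; ring
  simp only [dotProduct, hmv, mul_sub]
  rw [Finset.sum_sub_distrib]
  congr 1
  · exact Finset.sum_congr rfl fun i _ => by rw [hp]; ring
  · have e : ∀ i : Fin n, v i * (p i * ∑ j, p j * v j) = (p i * v i) * ∑ j, p j * v j :=
      fun i => by ring
    rw [Finset.sum_congr rfl fun i _ => e i, ← Finset.sum_mul, sq]

private lemma sum_p_lt_one (x : E n) : ∑ i, Real.exp (x i) / Sf x < 1 := by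
  have hS := Sf_pos x
  rw [← Finset.sum_div, div_lt_one hS]
  unfold Sf; linarith

private lemma p_pos (x : E n) (i : Fin n) : 0 < Real.exp (x i) / Sf x :=
  div_pos (Real.exp_pos _) (Sf_pos x)

private lemma quad_pos (x : E n) (v : Fin n → ℝ) (hv : v ≠ 0) :
    0 < v ⬝ᵥ (hess psi x) *ᵥ v := by
  rw [quad_form]
  set p : Fin n → ℝ := fun i => Real.exp (x i) / Sf x with hp
  obtain ⟨i₀, hi₀⟩ := Function.ne_iff.mp hv
  have hQ : 0 < ∑ i, p i * v i ^ 2 := by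
    apply Finset.sum_pos'
    · intro i _; exact mul_nonneg (p_pos x i).le (sq_nonneg _)
    · exact ⟨i₀, Finset.mem_univ _, mul_pos (p_pos x i₀) (sq_pos_of_ne_zero (by simpa using hi₀))⟩
  have hcs : (∑ i, p i * v i) ^ 2 ≤ (∑ i, p i) * ∑ i, p i * v i ^ 2 := by
    have h := Finset.sum_mul_sq_le_sq_mul_sq Finset.univ
      (fun i => Real.sqrt (p i)) (fun i => Real.sqrt (p i) * v i)
    have e1 : ∀ i : Fin n, Real.sqrt (p i) * (Real.sqrt (p i) * v i) = p i * v i := by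
      intro i
      rw [← mul_assoc, Real.mul_self_sqrt (p_pos x i).le]
    have e2 : ∀ i : Fin n, Real.sqrt (p i) ^ 2 = p i := fun i =>
      Real.sq_sqrt (p_pos x i).le
    have e3 : ∀ i : Fin n, (Real.sqrt (p i) * v i) ^ 2 = p i * v i ^ 2 := by
      intro i; rw [mul_pow, e2]
    simp only [e1, e2, e3] at h
    exact h
  have hPs : (∑ i, p i) * (∑ i, p i * v i ^ 2) < ∑ i, p i * v i ^ 2 := by
    have := sum_p_lt_one x
    calc (∑ i, p i) * (∑ i, p i * v i ^ 2) < 1 * ∑ i, p i * v i ^ 2 := by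
          exact mul_lt_mul_of_pos_right this hQ
      _ = ∑ i, p i * v i ^ 2 := one_mul _
  linarith [hcs.trans_lt hPs]

private lemma quad_lt (x : E n) (v : Fin n → ℝ) (hv : v ≠ 0) :
    v ⬝ᵥ (hess psi x) *ᵥ v < ∑ i, v i ^ 2 := by
  rw [quad_form]
  set p : Fin n → ℝ := fun i => Real.exp (x i) / Sf x with hp
  obtain ⟨i₀, hi₀⟩ := Function.ne_iff.mp hv
  have hplt : ∀ i : Fin n, p i < 1 := by
    intro i
    have hS := Sf_pos x
    rw [hp]
    rw [div_lt_one hS]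
    have h1 : ∀ j ∈ (Finset.univ : Finset (Fin n)), 0 ≤ Real.exp (x j) :=
      fun j _ => (Real.exp_pos _).le
    have h2 : Real.exp (x i) ≤ ∑ j, Real.exp (x j) :=
      Finset.single_le_sum h1 (Finset.mem_univ i)
    unfold Sf; linarith
  have hlt : ∑ i, p i * v i ^ 2 < ∑ i, v i ^ 2 := by
    apply Finset.sum_lt_sum
    · intro i _
      exact mul_le_of_le_one_left (sq_nonneg _) (hplt i).le
    · refine ⟨i₀, Finset.mem_univ _, ?_⟩
      have : 0 < v i₀ ^ 2 := sq_pos_of_ne_zero (by simpa using hi₀)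
      calc p i₀ * v i₀ ^ 2 < 1 * v i₀ ^ 2 := mul_lt_mul_of_pos_right (hplt i₀) this
        _ = v i₀ ^ 2 := one_mul _
  nlinarith [sq_nonneg (∑ i, p i * v i)]

private lemma hess_symm (x : E n) (i j : Fin n) : hess psi x j i = hess psi x i j := by
  rw [hess_psi_apply, hess_psi_apply]
  by_cases h : i = j
  · subst h; ring
  · simp [h, Ne.symm h]; ring

end Aux

/-- For every `θ`, `0 ≺ ∇²ψ(θ) ≺ I`. -/
theorem stmt_1 {n : ℕ} (θ : E n) :
    (hess psi θ).PosDef ∧ ((1 : Matrix (Fin n) (Fin n) ℝ) - hess psi θ).PosDef := by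
  constructor
  · refine Matrix.posDef_iff_dotProduct_mulVec.mpr ⟨?_, ?_⟩
    · ext i j
      simp only [Matrix.conjTranspose_apply, star_trivial]
      exact (hess_symm θ i j)
    · intro v hv
      simpa using quad_pos θ v hv
  · refine Matrix.posDef_iff_dotProduct_mulVec.mpr ⟨?_, ?_⟩
    · ext i j
      simp only [Matrix.conjTranspose_apply, Matrix.sub_apply, star_trivial, Matrix.one_apply]
      rw [hess_symm θ j i]
      by_cases h : i = j
      · subst h; simp
      · simp [h, Ne.symm h]
    · intro v hv
      have h1 : dotProduct v (((1 : Matrix (Fin n) (Fin n) ℝ) - hess psi θ).mulVec v)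
          = (∑ i, v i ^ 2) - dotProduct v ((hess psi θ).mulVec v) := by
        rw [Matrix.sub_mulVec, dotProduct_sub, Matrix.one_mulVec]
        congr 1
        simp [dotProduct, sq]
      have := quad_lt θ v hv
      simp only [star_trivial]
      rw [h1]
      linarith

end
end

section
/- Let Q be an n×n real symmetric positive definite matrix with condition number κ = λ_max(Q)/λ_min(Q), set α = 2/(λ_min(Q) + λ_max(Q)) and M = I − αQ. Then: (a) there is a unique symmetric matrix P solving the equation P = M·P·M + I; this P is positive definite, satisfies P ⪯ ((κ+1)²/(4κ))·I, and λ_max(P) = (κ+1)²/(4κ); and (b) for every symmetric positive semidefinite matrix P₀, the recursion P(k+1) = M·P(k)·M + I with P(0) = P₀ converges to P as k → ∞. -/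
open Filter

noncomputable section

set_option maxHeartbeats 1600000

theorem sq_id {x : ℝ} (h : 0 < 1 - x^2) : 1/(1-x^2) = x^2 * (1/(1-x^2)) + 1 := by
  have hx : (1 - x^2) ≠ 0 := h.ne'
  field_simp
  ring


open Matrix in
theorem conj_fixed_unique {n : ℕ} (U : Matrix (Fin n) (Fin n) ℝ)
    (hU1 : U * Uᴴ = 1) (hU2 : Uᴴ * U = 1) (m g : Fin n → ℝ)
    (hpos : ∀ i j, 0 < 1 - m i * m j) (hgv : ∀ i, g i * (1 - m i * m i) = 1)
    (P' : Matrix (Fin n) (Fin n) ℝ)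
    (hP' : P' = (U * Matrix.diagonal m * Uᴴ) * P' * (U * Matrix.diagonal m * Uᴴ) + 1) :
    P' = U * Matrix.diagonal g * Uᴴ := by
  have hP'E : P' = U * (Uᴴ * P' * U) * Uᴴ := by
    rw [show U * (Uᴴ * P' * U) * Uᴴ = (U * Uᴴ) * P' * (U * Uᴴ) by simp only [mul_assoc],
      hU1, one_mul, mul_one]
  have hEeq : Uᴴ * P' * U = Matrix.diagonal m * (Uᴴ * P' * U) * Matrix.diagonal m + 1 := by
    conv_lhs => rw [hP']
    rw [show Uᴴ * (U * Matrix.diagonal m * Uᴴ * P' * (U * Matrix.diagonal m * Uᴴ) + 1) * U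
        = (Uᴴ * U) * Matrix.diagonal m * (Uᴴ * P' * U) * Matrix.diagonal m * (Uᴴ * U)
          + Uᴴ * U by
      rw [Matrix.mul_add, Matrix.add_mul]
      simp only [mul_assoc, Matrix.mul_one]]
    rw [hU2]
    simp only [one_mul, mul_one]
  have hEdiag : Uᴴ * P' * U = Matrix.diagonal g := by
    ext i j
    have h := congrFun (congrFun hEeq i) j
    rw [Matrix.add_apply, Matrix.mul_diagonal, Matrix.diagonal_mul, Matrix.one_apply] at h
    rw [Matrix.diagonal_apply]
    by_cases hij : i = j
    · subst hij
      simp only [if_pos rfl, if_true] at h ⊢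
      have h2 := hpos i i
      have h5 := hgv i
      nlinarith
    · simp only [if_neg hij] at h ⊢
      have h6 := hpos i j
      have : (Uᴴ * P' * U) i j * (1 - m i * m j) = 0 := by ring_nf; ring_nf at h; linarith
      rcases mul_eq_zero.mp this with h' | h'
      · exact h'
      · exfalso; linarith
  rw [hP'E, hEdiag]

theorem expand_ring {R : Type*} [Ring R] (M P X : R) :
    M * (P + X) * M + 1 = (M * P * M + 1) + M * X * M := by noncomm_ring

open Matrix in
theorem diag_sandwich {n : ℕ} (m : Fin n → ℝ) (E₀ : Matrix (Fin n) (Fin n) ℝ) (k : ℕ) :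
    Matrix.diagonal m * (Matrix.of fun i j => (m i * m j) ^ k * E₀ i j) * Matrix.diagonal m
      = Matrix.of fun i j => (m i * m j) ^ (k + 1) * E₀ i j := by
  ext i j
  rw [Matrix.mul_diagonal, Matrix.diagonal_mul]
  simp only [Matrix.of_apply]
  ring

open Matrix in
theorem lamSet_conj {n : ℕ} (U : Matrix (Fin n) (Fin n) ℝ)
    (hU1 : U * Uᴴ = 1) (hU2 : Uᴴ * U = 1) (d : Fin n → ℝ) :
    lamSet (U * Matrix.diagonal d * Uᴴ) = Set.range d := by
  ext μ
  constructor
  · rintro ⟨v, hv, hvec⟩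
    set w := Uᴴ *ᵥ v with hw
    have hwne : w ≠ 0 := by
      intro h
      apply hv
      have : U *ᵥ w = v := by
        rw [hw, mulVec_mulVec, hU1, one_mulVec]
      rw [h, mulVec_zero] at this
      exact this.symm
    have hdw : Matrix.diagonal d *ᵥ w = μ • w := by
      have : Uᴴ *ᵥ ((U * Matrix.diagonal d * Uᴴ) *ᵥ v) = Uᴴ *ᵥ (μ • v) := by rw [hvec]
      rw [mulVec_mulVec, mulVec_smul] at this
      calc Matrix.diagonal d *ᵥ w = (Matrix.diagonal d * Uᴴ) *ᵥ v := by rw [hw, mulVec_mulVec]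
        _ = (Uᴴ * (U * Matrix.diagonal d * Uᴴ)) *ᵥ v := by
              rw [show Uᴴ * (U * Matrix.diagonal d * Uᴴ) = (Uᴴ * U) * Matrix.diagonal d * Uᴴ by
                simp only [Matrix.mul_assoc], hU2, Matrix.one_mul]
        _ = μ • w := this
    obtain ⟨i, hi⟩ := Function.ne_iff.mp hwne
    have := congrFun hdw i
    rw [mulVec_diagonal] at this
    have : d i * w i = μ * w i := this
    refine ⟨i, ?_⟩
    exact mul_right_cancel₀ hi this
  · rintro ⟨i, rfl⟩
    refine ⟨U *ᵥ Pi.single i 1, ?_, ?_⟩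
    · intro h
      have : (Uᴴ * U) *ᵥ Pi.single i 1 = (0 : Fin n → ℝ) := by
        rw [← mulVec_mulVec, h, mulVec_zero]
      rw [hU2, one_mulVec] at this
      have := congrFun this i
      simp at this
    · rw [mulVec_mulVec, show U * Matrix.diagonal d * Uᴴ * U = U * Matrix.diagonal d * (Uᴴ * U) by
        simp only [Matrix.mul_assoc], hU2, Matrix.mul_one, ← mulVec_mulVec,
        diagonal_mulVec_single, ← mulVec_smul]
      rw [mulVec_smul, mulVec_single]
      ext j
      simp [mul_comm]


open Matrix in
/-- The discrete Lyapunov equation `P = M·P·M + I`: unique symmetric solution,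
its bounds, and convergence of the associated recursion. -/
theorem stmt_17 {n : ℕ} (hn : 0 < n) (Q : Matrix (Fin n) (Fin n) ℝ)
    (hQ : Q.PosDef) :
    (let κ := condNum Q
     let α := 2 / (lamMin Q + lamMax Q)
     let M := (1 : Matrix (Fin n) (Fin n) ℝ) - α • Q
     ∃ P : Matrix (Fin n) (Fin n) ℝ,
       P.IsSymm ∧ P = M * P * M + 1 ∧
       (∀ P' : Matrix (Fin n) (Fin n) ℝ, P'.IsSymm → P' = M * P' * M + 1 → P' = P) ∧
       P.PosDef ∧
       (((κ + 1) ^ 2 / (4 * κ)) • (1 : Matrix (Fin n) (Fin n) ℝ) - P).PosSemidef ∧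
       lamMax P = (κ + 1) ^ 2 / (4 * κ) ∧
       ∀ P₀ : Matrix (Fin n) (Fin n) ℝ, P₀.PosSemidef →
         ∀ Pseq : ℕ → Matrix (Fin n) (Fin n) ℝ, Pseq 0 = P₀ →
           (∀ k, Pseq (k + 1) = M * Pseq k * M + 1) →
           Filter.Tendsto Pseq Filter.atTop (nhds P)) := by
  intro κ α M
  classical
  set hH : Q.IsHermitian := hQ.1 with hHdef
  set d : Fin n → ℝ := hH.eigenvalues with hd
  set U : Matrix (Fin n) (Fin n) ℝ := (hH.eigenvectorUnitary : Matrix (Fin n) (Fin n) ℝ) with hUdef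
  have hU1 : U * Uᴴ = 1 := by
    have := (Matrix.mem_unitaryGroup_iff.mp hH.eigenvectorUnitary.2)
    simpa [Matrix.star_eq_conjTranspose] using this
  have hU2 : Uᴴ * U = 1 := by
    have := (Matrix.mem_unitaryGroup_iff'.mp hH.eigenvectorUnitary.2)
    simpa [Matrix.star_eq_conjTranspose] using this
  have hspec : Q = U * Matrix.diagonal d * Uᴴ := by
    have := hH.spectral_theorem
    simpa [Matrix.star_eq_conjTranspose] using this
  have hdpos : ∀ i, 0 < d i := hQ.eigenvalues_pos
  have hQset : lamSet Q = Set.range d := by rw [hspec]; exact lamSet_conj U hU1 hU2 d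
  have hfin : (Set.range d).Finite := Set.finite_range d
  have hne : (Set.range d).Nonempty := ⟨d ⟨0, hn⟩, ⟨0, hn⟩, rfl⟩
  set a : ℝ := lamMin Q with hadef
  set b : ℝ := lamMax Q with hbdef
  have haMem : a ∈ Set.range d := by
    rw [hadef, lamMin, hQset]; exact hne.csInf_mem hfin
  have hbMem : b ∈ Set.range d := by
    rw [hbdef, lamMax, hQset]; exact hne.csSup_mem hfin
  have hale : ∀ i, a ≤ d i := fun i => by
    rw [hadef, lamMin, hQset]; exact csInf_le hfin.bddBelow ⟨i, rfl⟩
  have hble : ∀ i, d i ≤ b := fun i => by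
    rw [hbdef, lamMax, hQset]; exact le_csSup hfin.bddAbove ⟨i, rfl⟩
  have ha : 0 < a := by obtain ⟨i, hi⟩ := haMem; rw [← hi]; exact hdpos i
  have hab : a ≤ b := by obtain ⟨i, hi⟩ := haMem; rw [← hi]; exact hble i
  have hb : 0 < b := lt_of_lt_of_le ha hab
  have habpos : 0 < a + b := by linarith
  -- scalar data
  set αv : ℝ := 2 / (a + b) with hαdef
  set m : Fin n → ℝ := fun i => 1 - αv * d i with hm
  set g : Fin n → ℝ := fun i => 1 / (1 - m i ^ 2) with hg
  set c : ℝ := (a + b) ^ 2 / (4 * a * b) with hcdef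
  have hcpos : 0 < c := by positivity
  have key1 : ∀ i, 4 * a * b ≤ (1 - m i ^ 2) * (a + b) ^ 2 := by
    intro i
    have h1 := hale i; have h2 := hble i
    have hmi : m i = 1 - 2 / (a + b) * d i := rfl
    rw [hmi]
    have e : (1 - (1 - 2 / (a + b) * d i) ^ 2) * (a + b) ^ 2
        = 4 * d i * (a + b) - 4 * d i ^ 2 := by
      field_simp; ring
    rw [e]
    nlinarith [mul_nonneg (sub_nonneg.2 h1) (sub_nonneg.2 h2)]
  have key2 : ∀ i, 0 < 1 - m i ^ 2 := by
    intro i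
    by_contra h
    push_neg at h
    have := mul_nonpos_of_nonpos_of_nonneg h (sq_nonneg (a + b))
    nlinarith [key1 i, mul_pos ha hb]
  have key4 : ∀ i, 0 < g i := fun i => by
    have h : g i = 1 / (1 - m i ^ 2) := rfl
    rw [h]
    have := key2 i
    positivity
  have key3 : ∀ i, g i ≤ c := by
    intro i
    have hgi : g i = 1 / (1 - m i ^ 2) := rfl
    rw [hgi, hcdef, div_le_div_iff₀ (key2 i) (by positivity)]
    nlinarith [key1 i]
  have key5 : ∀ i, g i = m i ^ 2 * g i + 1 := fun i => sq_id (key2 i)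
  have habs : ∀ i, |m i| < 1 := by
    intro i
    rw [abs_lt]; constructor <;> nlinarith [key2 i]
  have key6 : ∀ i j, 0 < 1 - m i * m j := by
    intro i j
    have h1 : |m i| * |m j| < 1 := by
      nlinarith [abs_nonneg (m i), abs_nonneg (m j), habs i, habs j]
    have h2 : m i * m j ≤ |m i| * |m j| := by
      rw [← abs_mul]; exact le_abs_self _
    linarith
  -- matrix layer
  have conj_mul : ∀ D E : Matrix (Fin n) (Fin n) ℝ,
      (U * D * Uᴴ) * (U * E * Uᴴ) = U * (D * E) * Uᴴ := by
    intro D E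
    rw [mul_assoc (U * D) Uᴴ _, ← mul_assoc Uᴴ (U * E) Uᴴ, ← mul_assoc Uᴴ U E, hU2, one_mul,
      ← mul_assoc, mul_assoc U D E]
  set P : Matrix (Fin n) (Fin n) ℝ := U * Matrix.diagonal g * Uᴴ with hPdef
  have hone : (1 : Matrix (Fin n) (Fin n) ℝ) = U * Matrix.diagonal (fun _ => (1:ℝ)) * Uᴴ := by
    rw [show Matrix.diagonal (fun _ => (1:ℝ)) = (1 : Matrix (Fin n) (Fin n) ℝ) from Matrix.diagonal_one,
      mul_one, hU1]
  have hM : (1 : Matrix (Fin n) (Fin n) ℝ) - αv • Q = U * Matrix.diagonal m * Uᴴ := by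
    have h2 : αv • Q = U * Matrix.diagonal (fun i => αv * d i) * Uᴴ := by
      rw [hspec, ← Matrix.smul_mul, ← Matrix.mul_smul]
      congr 1
      congr 1
      rw [← Matrix.diagonal_smul]
      rfl
    rw [h2, hone, ← Matrix.sub_mul, ← Matrix.mul_sub, Matrix.diagonal_sub]
  set M' : Matrix (Fin n) (Fin n) ℝ := U * Matrix.diagonal m * Uᴴ with hM'def
  -- the fixed point equation
  have heq : P = M' * P * M' + 1 := by
    rw [hM'def, hPdef, conj_mul, conj_mul, hone, ← Matrix.add_mul, ← Matrix.mul_add,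
      Matrix.diagonal_mul_diagonal, Matrix.diagonal_mul_diagonal, Matrix.diagonal_add]
    congr 1
    congr 1
    exact congrArg Matrix.diagonal (funext fun i => by nlinarith [key5 i])
  have huniq : ∀ P' : Matrix (Fin n) (Fin n) ℝ, P' = M' * P' * M' + 1 → P' = P := by
    intro P' hP'
    rw [hPdef]
    refine conj_fixed_unique U hU1 hU2 m g key6 (fun i => ?_) P' (by rw [← hM'def]; exact hP')
    have h2 := (key2 i).ne'
    have : g i = 1 / (1 - m i ^ 2) := rfl
    rw [this]
    field_simp
  -- Hermitian / symmetric
  have hPherm : P.IsHermitian := by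
    rw [hPdef]
    exact Matrix.isHermitian_mul_mul_conjTranspose U
      (Matrix.isHermitian_diagonal_iff.mpr (fun i => IsSelfAdjoint.all _))
  have hPsymm : P.IsSymm := by
    rw [Matrix.IsSymm, ← Matrix.conjTranspose_eq_transpose_of_trivial]
    exact hPherm
  -- positive definite
  have hPD : P.PosDef := by
    refine Matrix.PosDef.of_dotProduct_mulVec_pos hPherm (fun x hx => ?_)
    have hy : U *ᵥ (Uᴴ *ᵥ x) = x := by rw [Matrix.mulVec_mulVec, hU1, Matrix.one_mulVec]
    have hyne : Uᴴ *ᵥ x ≠ 0 := fun h => hx (by rw [← hy, h, Matrix.mulVec_zero])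
    have hDG : (Matrix.diagonal g).PosDef := Matrix.PosDef.diagonal key4
    have e : star x ⬝ᵥ (P *ᵥ x)
        = star (Uᴴ *ᵥ x) ⬝ᵥ (Matrix.diagonal g *ᵥ (Uᴴ *ᵥ x)) := by
      rw [hPdef, ← Matrix.mulVec_mulVec, ← Matrix.mulVec_mulVec]
      rw [show (star x : Fin n → ℝ) = x from funext fun i => rfl,
        show (star (Uᴴ *ᵥ x) : Fin n → ℝ) = Uᴴ *ᵥ x from funext fun i => rfl]
      rw [Matrix.dotProduct_mulVec x U _, ← Matrix.mulVec_transpose,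
        ← Matrix.conjTranspose_eq_transpose_of_trivial]
    rw [e]
    exact hDG.dotProduct_mulVec_pos hyne
  -- PSD bound
  have hcP : c • (1 : Matrix (Fin n) (Fin n) ℝ) - P
      = U * Matrix.diagonal (fun i => c - g i) * Uᴴ := by
    have h1 : c • (1 : Matrix (Fin n) (Fin n) ℝ)
        = U * (c • (1 : Matrix (Fin n) (Fin n) ℝ)) * Uᴴ := by
      rw [Matrix.mul_smul, Matrix.smul_mul, mul_one, hU1]
    rw [h1, hPdef, ← Matrix.sub_mul, ← Matrix.mul_sub, Matrix.smul_one_eq_diagonal,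
      Matrix.diagonal_sub]
  have hPSD : (c • (1 : Matrix (Fin n) (Fin n) ℝ) - P).PosSemidef := by
    rw [hcP]
    exact (Matrix.PosSemidef.diagonal (fun i => sub_nonneg.2 (key3 i))).mul_mul_conjTranspose_same U
  -- lamMax P = c
  have hPset : lamSet P = Set.range g := by rw [hPdef]; exact lamSet_conj U hU1 hU2 g
  obtain ⟨i₀, hi₀⟩ := haMem
  have hgi₀ : g i₀ = c := by
    have hm₀ : m i₀ = 1 - 2 / (a + b) * a := by rw [hm]; simp only; rw [hi₀, hαdef]
    have h1 : 1 - m i₀ ^ 2 = 4 * a * b / (a + b) ^ 2 := by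
      rw [hm₀]; field_simp; ring
    have h2 : g i₀ = 1 / (1 - m i₀ ^ 2) := rfl
    rw [h2, h1, one_div_div, hcdef]
  have hlamP : lamMax P = c := by
    rw [lamMax]
    apply IsGreatest.csSup_eq
    constructor
    · rw [hPset]; exact ⟨i₀, hgi₀⟩
    · rintro μ hμ
      rw [hPset] at hμ
      obtain ⟨i, rfl⟩ := hμ
      exact key3 i
  -- convergence
  have hconv : ∀ Pseq : ℕ → Matrix (Fin n) (Fin n) ℝ,
      (∀ k, Pseq (k + 1) = M' * Pseq k * M' + 1) →
      Filter.Tendsto Pseq Filter.atTop (nhds P) := by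
    intro Pseq hrec
    set E₀ : Matrix (Fin n) (Fin n) ℝ := Uᴴ * (Pseq 0 - P) * U with hE₀
    have hform : ∀ k, Pseq k
        = P + U * (Matrix.of fun i j => (m i * m j) ^ k * E₀ i j) * Uᴴ := by
      intro k
      induction k with
      | zero =>
        have h1 : (Matrix.of fun i j => (m i * m j) ^ 0 * E₀ i j) = E₀ := by
          ext i j; simp
        rw [h1, hE₀, show U * (Uᴴ * (Pseq 0 - P) * U) * Uᴴ
            = (U * Uᴴ) * (Pseq 0 - P) * (U * Uᴴ) by simp only [mul_assoc], hU1, one_mul, mul_one]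
        abel
      | succ k ih =>
        rw [hrec k, ih]
        rw [expand_ring, ← heq, hM'def, conj_mul, conj_mul, diag_sandwich]
    have hE : Filter.Tendsto
        (fun k => (Matrix.of fun i j => (m i * m j) ^ k * E₀ i j : Matrix (Fin n) (Fin n) ℝ))
        Filter.atTop (nhds 0) := by
      refine tendsto_pi_nhds.mpr ?_
      intro i
      rw [tendsto_pi_nhds]
      intro j
      have habsij : |m i * m j| < 1 := by
        rw [abs_mul]
        nlinarith [abs_nonneg (m i), abs_nonneg (m j), habs i, habs j]
      have := (tendsto_pow_atTop_nhds_zero_of_abs_lt_one habsij).mul_const (E₀ i j)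
      rw [zero_mul] at this
      exact this
    have hcont : Continuous (fun X : Matrix (Fin n) (Fin n) ℝ => P + U * X * Uᴴ) :=
      continuous_const.add ((continuous_const.matrix_mul continuous_id).matrix_mul continuous_const)
    have := (hcont.tendsto 0).comp hE
    simp only [Function.comp_def] at this
    rw [mul_zero, Matrix.zero_mul, add_zero] at this
    exact Filter.Tendsto.congr (fun k => (hform k).symm) this
  -- assemble
  have hκ : κ = b / a := by
    rw [show κ = condNum Q from rfl, condNum, ← hadef, ← hbdef]
  have hαs : α = αv := by
    rw [show α = 2 / (lamMin Q + lamMax Q) from rfl, ← hadef, ← hbdef]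
  have hMs : M = M' := by
    rw [show M = 1 - α • Q from rfl, hαs, hM]
  have hc2 : (κ + 1) ^ 2 / (4 * κ) = c := by
    rw [hκ, hcdef]
    field_simp
    ring
  refine ⟨P, hPsymm, ?_, ?_, hPD, ?_, ?_, ?_⟩
  · rw [hMs]; exact heq
  · intro P' _ hfix
    exact huniq P' (by rw [← hMs]; exact hfix)
  · rw [hc2]; exact hPSD
  · rw [hc2]; exact hlamP
  · intro P₀ _ Pseq h0 hrec
    exact hconv Pseq (fun k => by rw [hrec k, hMs])


end
end

section
/- Let q ∈ S_n with η coordinates η_q. The loss L_q in η coordinates is differentiable on Δ_n, and for every η ∈ Δ_n its gradient is given by ∇L_q(η) = −∇²φ(η)·(η_q − η); equivalently, since ∇²φ(η) is invertible, the natural gradient (∇²φ(η))^{−1}·∇L_q(η) equals η − η_q. -/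
open Filter

noncomputable section

/-! ### Auxiliary lemmas -/

section Aux

variable {n : ℕ}

/-- The summation continuous linear map on `E n`. -/
def sumCLM (n : ℕ) : E n →L[ℝ] ℝ := ∑ i, (EuclideanSpace.proj i : E n →L[ℝ] ℝ)

lemma sumCLM_apply (y : E n) : sumCLM n y = ∑ i, y i := by
  simp [sumCLM]

lemma isOpen_Δset : IsOpen (Δset n) := by
  have h1 : Δset n = (⋂ i, {η : E n | 0 < η i}) ∩ {η : E n | ∑ i, η i < 1} := by
    ext η; simp [Δset, Set.mem_iInter]
  rw [h1]
  refine IsOpen.inter (isOpen_iInter_of_finite fun i => ?_) ?_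
  · exact isOpen_lt continuous_const (EuclideanSpace.proj i).continuous
  · have hc : Continuous fun η : E n => ∑ i, η i := by
      have h : (fun η : E n => ∑ i, η i) = ⇑(sumCLM n) := funext fun y => (sumCLM_apply y).symm
      rw [h]; exact (sumCLM n).continuous
    exact isOpen_lt hc continuous_const

lemma hasFDerivAt_sum (y : E n) : HasFDerivAt (fun z : E n => ∑ i, z i) (sumCLM n) y := by
  have h : (fun z : E n => ∑ i, z i) = ⇑(sumCLM n) := funext fun z => (sumCLM_apply z).symm
  rw [h]; exact (sumCLM n).hasFDerivAt

lemma hasFDerivAt_one_sub_sum (y : E n) :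
    HasFDerivAt (fun z : E n => 1 - ∑ i, z i) (-sumCLM n) y := by
  simpa using (hasFDerivAt_const (1:ℝ) y).fun_sub (hasFDerivAt_sum y)

lemma hasFDerivAt_proj (i : Fin n) (y : E n) :
    HasFDerivAt (fun z : E n => z i) (EuclideanSpace.proj (𝕜 := ℝ) i) y :=
  (EuclideanSpace.proj (𝕜 := ℝ) i).hasFDerivAt

/-- The Fréchet derivative of `phi`. -/
def Dphi (η : E n) : E n →L[ℝ] ℝ :=
  (∑ i, (Real.log (η i) + 1) • (EuclideanSpace.proj i : E n →L[ℝ] ℝ))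
    - (Real.log (1 - ∑ i, η i) + 1) • sumCLM n

lemma hasFDerivAt_phi {y : E n} (hy : y ∈ Δset n) : HasFDerivAt phi (Dphi y) y := by
  obtain ⟨hpos, hlt⟩ := hy
  have hs : (0:ℝ) < 1 - ∑ i, y i := by linarith
  have h1 : HasFDerivAt (fun z : E n => ∑ i, z i * Real.log (z i))
      (∑ i, (Real.log (y i) + 1) • (EuclideanSpace.proj i : E n →L[ℝ] ℝ)) y := by
    refine HasFDerivAt.fun_sum fun i _ => ?_
    exact (Real.hasDerivAt_mul_log (hpos i).ne').comp_hasFDerivAt y (hasFDerivAt_proj i y)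
  have h2 : HasFDerivAt (fun z : E n => (1 - ∑ i, z i) * Real.log (1 - ∑ i, z i))
      ((Real.log (1 - ∑ i, y i) + 1) • (-sumCLM n)) y :=
    (Real.hasDerivAt_mul_log hs.ne').comp_hasFDerivAt (f := fun z : E n => 1 - ∑ i, z i) y (hasFDerivAt_one_sub_sum y)
  have h3 := h1.add h2
  have h4 : Dphi y = (∑ i, (Real.log (y i) + 1) • (EuclideanSpace.proj i : E n →L[ℝ] ℝ))
      + (Real.log (1 - ∑ i, y i) + 1) • (-sumCLM n) := by
    rw [Dphi]; module
  rw [h4]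
  exact h3

lemma Dphi_single (y : E n) (j : Fin n) :
    Dphi y (EuclideanSpace.single j 1) = Real.log (y j) - Real.log (1 - ∑ i, y i) := by
  simp [Dphi, sumCLM_apply, ContinuousLinearMap.sum_apply, EuclideanSpace.single_apply,
    Finset.sum_ite_eq, mul_ite]

lemma fderiv_phi {y : E n} (hy : y ∈ Δset n) (j : Fin n) :
    fderiv ℝ phi y (EuclideanSpace.single j 1)
      = Real.log (y j) - Real.log (1 - ∑ i, y i) := by
  rw [(hasFDerivAt_phi hy).fderiv, Dphi_single]

/-- The Hessian matrix of `phi` at `η`. -/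
def Hmat (η : E n) : Matrix (Fin n) (Fin n) ℝ :=
  Matrix.of fun i j => (if i = j then (η j)⁻¹ else 0) + (1 - ∑ k, η k)⁻¹

lemma hess_phi_eq {η : E n} (hη : η ∈ Δset n) : hess phi η = Hmat η := by
  obtain ⟨hpos, hlt⟩ := hη
  have hs : (0:ℝ) < 1 - ∑ k, η k := by linarith
  ext i j
  have hev : (fun y : E n => fderiv ℝ phi y (EuclideanSpace.single j 1))
      =ᶠ[nhds η] fun y => Real.log (y j) - Real.log (1 - ∑ k, y k) := by
    filter_upwards [isOpen_Δset.mem_nhds ⟨hpos, hlt⟩] with y hy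
    exact fderiv_phi hy j
  have hj : HasFDerivAt (fun y : E n => Real.log (y j) - Real.log (1 - ∑ k, y k))
      ((η j)⁻¹ • (EuclideanSpace.proj j : E n →L[ℝ] ℝ) + (1 - ∑ k, η k)⁻¹ • sumCLM n) η := by
    have ha : HasFDerivAt (fun y : E n => Real.log (y j))
        ((η j)⁻¹ • (EuclideanSpace.proj j : E n →L[ℝ] ℝ)) η :=
      (Real.hasDerivAt_log (hpos j).ne').comp_hasFDerivAt (f := fun z : E n => z j) η (hasFDerivAt_proj j η)
    have hb : HasFDerivAt (fun y : E n => Real.log (1 - ∑ k, y k))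
        ((1 - ∑ k, η k)⁻¹ • (-sumCLM n)) η :=
      (Real.hasDerivAt_log hs.ne').comp_hasFDerivAt (f := fun z : E n => 1 - ∑ i, z i) η (hasFDerivAt_one_sub_sum η)
    have h3 := ha.sub hb
    have h4 : (η j)⁻¹ • (EuclideanSpace.proj j : E n →L[ℝ] ℝ) + (1 - ∑ k, η k)⁻¹ • sumCLM n
        = (η j)⁻¹ • (EuclideanSpace.proj j : E n →L[ℝ] ℝ)
          - (1 - ∑ k, η k)⁻¹ • (-sumCLM n) := by module
    rw [h4]; exact h3
  show fderiv ℝ (fun y : E n => fderiv ℝ phi y (EuclideanSpace.single j 1)) η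
      (EuclideanSpace.single i 1) = Hmat η i j
  rw [hev.fderiv_eq, hj.fderiv]
  simp only [ContinuousLinearMap.add_apply, ContinuousLinearMap.coe_smul', Pi.smul_apply,
    smul_eq_mul, sumCLM_apply, Hmat, Matrix.of_apply]
  have hp : (EuclideanSpace.proj j : E n →L[ℝ] ℝ) (EuclideanSpace.single i 1)
      = if i = j then (1:ℝ) else 0 := by
    simp [EuclideanSpace.single_apply, eq_comm]
  have hq : (∑ k, (EuclideanSpace.single i 1 : E n) k) = 1 := by
    simp [EuclideanSpace.single_apply]
  rw [hp, hq]
  rcases eq_or_ne i j with h | h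
  · subst h; simp
  · simp [h]

lemma Hmat_posDef {η : E n} (hη : η ∈ Δset n) : (Hmat η).PosDef := by
  obtain ⟨hpos, hlt⟩ := hη
  have hs : (0:ℝ) < 1 - ∑ k, η k := by linarith
  rw [Matrix.posDef_iff_dotProduct_mulVec]
  constructor
  · ext i j
    simp only [Matrix.conjTranspose_apply, Hmat, Matrix.of_apply, star_trivial]
    rcases eq_or_ne i j with h | h
    · subst h; rfl
    · simp [h, Ne.symm h]
  · intro x hx
    have key : dotProduct (star x) ((Hmat η).mulVec x)
        = (∑ j, (x j)^2 * (η j)⁻¹) + (1 - ∑ k, η k)⁻¹ * (∑ j, x j)^2 := by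
      simp only [dotProduct, Matrix.mulVec, Hmat, Matrix.of_apply, Pi.star_apply,
        star_trivial, add_mul, ite_mul, zero_mul, Finset.sum_add_distrib, Finset.sum_ite_eq,
        Finset.mem_univ, if_true, mul_add, Finset.mul_sum]
      congr 1
      · exact Finset.sum_congr rfl fun j _ => by ring
      · rw [sq, Finset.sum_mul, Finset.mul_sum]
        refine Finset.sum_congr rfl fun j _ => ?_
        simp only [Finset.mul_sum]
        exact Finset.sum_congr rfl fun i _ => by ring
    rw [key]
    obtain ⟨j0, hj0⟩ := Function.ne_iff.mp hx
    have hx20 : (0:ℝ) < (x j0)^2 := by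
      have hne : x j0 ≠ 0 := by simpa using hj0
      exact lt_of_le_of_ne (sq_nonneg _) (Ne.symm (pow_ne_zero 2 hne))
    have h1 : 0 < ∑ j, (x j)^2 * (η j)⁻¹ := by
      refine Finset.sum_pos' (fun j _ => mul_nonneg (sq_nonneg _) (inv_nonneg.mpr (hpos j).le))
        ⟨j0, Finset.mem_univ j0, ?_⟩
      exact mul_pos hx20 (inv_pos.mpr (hpos j0))
    have h2 : 0 ≤ (1 - ∑ k, η k)⁻¹ * (∑ j, x j)^2 := by positivity
    exact lt_of_lt_of_le h1 (by linarith)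

/-- The gradient vector of `Leta q` at `η`. -/
def gradVec (q : Fin (n+1) → ℝ) (η : E n) : E n :=
  WithLp.toLp 2 (fun j => -(q j.castSucc) / η j + q (Fin.last n) / (1 - ∑ k, η k) : Fin n → ℝ)

lemma Leta_eq {q : Fin (n+1) → ℝ} (hq0 : ∀ i, 0 < q i) {y : E n} (hy : y ∈ Δset n) :
    Leta q y = (∑ i : Fin (n+1), q i * Real.log (q i))
      - ((∑ i : Fin n, q i.castSucc * Real.log (y i))
          + q (Fin.last n) * Real.log (1 - ∑ k, y k)) := by
  obtain ⟨hpos, hlt⟩ := hy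
  have hs : (0:ℝ) < 1 - ∑ k, y k := by linarith
  simp only [Leta, KL, mixDist]
  rw [Fin.sum_univ_castSucc, Fin.sum_univ_castSucc (f := fun i => q i * Real.log (q i))]
  simp only [Fin.snoc_castSucc, Fin.snoc_last]
  have hterm : ∀ i : Fin n, q i.castSucc * Real.log (q i.castSucc / y i)
      = q i.castSucc * Real.log (q i.castSucc) - q i.castSucc * Real.log (y i) := fun i => by
    rw [Real.log_div (hq0 _).ne' (hpos i).ne', mul_sub]
  have hlast : q (Fin.last n) * Real.log (q (Fin.last n) / (1 - ∑ k, y k))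
      = q (Fin.last n) * Real.log (q (Fin.last n))
        - q (Fin.last n) * Real.log (1 - ∑ k, y k) := by
    rw [Real.log_div (hq0 _).ne' hs.ne', mul_sub]
  rw [Finset.sum_congr rfl fun i _ => hterm i, hlast, Finset.sum_sub_distrib]
  ring

lemma hasGradientAt_Leta {q : Fin (n+1) → ℝ} (hq : q ∈ simplex n)
    {η : E n} (hη : η ∈ Δset n) : HasGradientAt (Leta q) (gradVec q η) η := by
  obtain ⟨hq0, hq1⟩ := hq
  obtain ⟨hpos, hlt⟩ := hη
  have hs : (0:ℝ) < 1 - ∑ k, η k := by linarith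
  set D : E n →L[ℝ] ℝ :=
    (∑ i, (q i.castSucc) • ((η i)⁻¹ • (EuclideanSpace.proj i : E n →L[ℝ] ℝ)))
      + (q (Fin.last n)) • ((1 - ∑ k, η k)⁻¹ • (-sumCLM n)) with hD
  have hinner : HasFDerivAt (fun y : E n => (∑ i : Fin n, q i.castSucc * Real.log (y i))
      + q (Fin.last n) * Real.log (1 - ∑ k, y k)) D η := by
    refine HasFDerivAt.add (HasFDerivAt.fun_sum fun i _ => ?_) (HasFDerivAt.const_mul ?_ _)
    · exact HasFDerivAt.const_mul
        ((Real.hasDerivAt_log (hpos i).ne').comp_hasFDerivAt η (hasFDerivAt_proj i η)) _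
    · exact (Real.hasDerivAt_log hs.ne').comp_hasFDerivAt η (hasFDerivAt_one_sub_sum η)
  have hF : HasFDerivAt (fun y : E n => (∑ i : Fin (n+1), q i * Real.log (q i))
      - ((∑ i : Fin n, q i.castSucc * Real.log (y i))
          + q (Fin.last n) * Real.log (1 - ∑ k, y k))) (-D) η := by
    simpa using (hasFDerivAt_const (∑ i : Fin (n+1), q i * Real.log (q i)) η).fun_sub hinner
  have hev : Leta q =ᶠ[nhds η] fun y : E n => (∑ i : Fin (n+1), q i * Real.log (q i))
      - ((∑ i : Fin n, q i.castSucc * Real.log (y i))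
          + q (Fin.last n) * Real.log (1 - ∑ k, y k)) := by
    filter_upwards [isOpen_Δset.mem_nhds ⟨hpos, hlt⟩] with y hy
    exact Leta_eq hq0 hy
  have hLeta : HasFDerivAt (Leta q) (-D) η := hF.congr_of_eventuallyEq hev
  rw [hasGradientAt_iff_hasFDerivAt]
  have hdual : InnerProductSpace.toDual ℝ (E n) (gradVec q η) = -D := by
    refine ContinuousLinearMap.ext fun v => ?_
    have hL : InnerProductSpace.toDual ℝ (E n) (gradVec q η) v
        = ∑ j, (-(q j.castSucc) / η j + q (Fin.last n) / (1 - ∑ k, η k)) * v j := by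
      simp [PiLp.inner_apply, RCLike.inner_apply, gradVec, mul_comm]
    have hR : (-D) v = -((∑ j, q j.castSucc * ((η j)⁻¹ * v j))
        + q (Fin.last n) * ((1 - ∑ k, η k)⁻¹ * (-(∑ j, v j)))) := by
      simp [hD, ContinuousLinearMap.sum_apply, sumCLM_apply, mul_comm]
    rw [hL, hR]
    have hsplit : ∀ j : Fin n, (-(q j.castSucc) / η j + q (Fin.last n) / (1 - ∑ k, η k)) * v j
        = -(q j.castSucc * ((η j)⁻¹ * v j))
          + q (Fin.last n) * ((1 - ∑ k, η k)⁻¹ * v j) := fun j => by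
      rw [div_eq_mul_inv, div_eq_mul_inv]; ring
    rw [Finset.sum_congr rfl fun j _ => hsplit j, Finset.sum_add_distrib, neg_add]
    congr 1
    · rw [Finset.sum_neg_distrib]
    · simp only [mul_neg, neg_neg, Finset.mul_sum]
  rw [hdual]
  exact hLeta

lemma toEuclideanCLM_apply' (A : Matrix (Fin n) (Fin n) ℝ) (x : E n) (j : Fin n) :
    Matrix.toEuclideanCLM (𝕜 := ℝ) A x j = ∑ k, A j k * x k := by
  have h : Matrix.toEuclideanCLM (𝕜 := ℝ) A x
      = (WithLp.equiv _ _).symm (A.mulVec (WithLp.equiv _ _ x)) := rfl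
  rw [h]
  simp [Matrix.mulVec, dotProduct]

lemma gradVec_eq {q : Fin (n+1) → ℝ} (hq : q ∈ simplex n)
    {η : E n} (hη : η ∈ Δset n) :
    gradVec q η = -(Matrix.toEuclideanCLM (𝕜 := ℝ) (Hmat η) (etaCoord q - η)) := by
  obtain ⟨hq0, hq1⟩ := hq
  obtain ⟨hpos, hlt⟩ := hη
  have hs : (0:ℝ) < 1 - ∑ k, η k := by linarith
  have hqc : (∑ k : Fin n, q k.castSucc) = 1 - q (Fin.last n) := by
    rw [Fin.sum_univ_castSucc] at hq1; linarith
  ext j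
  have hsub : ∀ k, (etaCoord q - η) k = q k.castSucc - η k := fun k => by
    simp [etaCoord, PiLp.sub_apply]
  have h1 : (-(Matrix.toEuclideanCLM (𝕜 := ℝ) (Hmat η) (etaCoord q - η))) j
      = -(∑ k, ((if j = k then (η k)⁻¹ else 0) + (1 - ∑ m, η m)⁻¹)
          * (q k.castSucc - η k)) := by
    have : (-(Matrix.toEuclideanCLM (𝕜 := ℝ) (Hmat η) (etaCoord q - η))) j
        = -((Matrix.toEuclideanCLM (𝕜 := ℝ) (Hmat η) (etaCoord q - η)) j) := rfl
    rw [this, toEuclideanCLM_apply' (Hmat η) _ j]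
    simp only [hsub, Hmat, Matrix.of_apply]
  rw [h1]
  have h2 : (∑ k, ((if j = k then (η k)⁻¹ else 0) + (1 - ∑ m, η m)⁻¹)
      * (q k.castSucc - η k))
      = (η j)⁻¹ * (q j.castSucc - η j)
        + (1 - ∑ m, η m)⁻¹ * ((1 - q (Fin.last n)) - ∑ m, η m) := by
    simp only [add_mul, ite_mul, zero_mul, Finset.sum_add_distrib, Finset.sum_ite_eq,
      Finset.mem_univ, if_true]
    congr 1
    rw [← Finset.mul_sum, Finset.sum_sub_distrib, hqc]
  rw [h2]
  show -(q j.castSucc) / η j + q (Fin.last n) / (1 - ∑ k, η k) = _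
  have hηj : η j ≠ 0 := (hpos j).ne'
  have hs' : (1 - ∑ k, η k) ≠ 0 := hs.ne'
  field_simp
  ring

end Aux

/-- Gradient of the loss in `η` coordinates and the natural gradient formula. -/
theorem stmt_19 {n : ℕ} (q : Fin (n+1) → ℝ) (hq : q ∈ simplex n)
    (η : E n) (hη : η ∈ Δset n) :
    HasGradientAt (Leta q)
      (-(Matrix.toEuclideanCLM (𝕜 := ℝ) (hess phi η) (etaCoord q - η))) η ∧
    IsUnit (hess phi η) ∧
    Matrix.toEuclideanCLM (𝕜 := ℝ) (hess phi η)⁻¹ (gradient (Leta q) η) =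
      η - etaCoord q := by
  have hH := hess_phi_eq hη
  have hpd := Hmat_posDef hη
  have hgrad : HasGradientAt (Leta q) (gradVec q η) η := hasGradientAt_Leta hq hη
  have hGv : gradVec q η = -(Matrix.toEuclideanCLM (𝕜 := ℝ) (Hmat η) (etaCoord q - η)) :=
    gradVec_eq hq hη
  refine ⟨by rw [hH, ← hGv]; exact hgrad, by rw [hH]; exact hpd.isUnit, ?_⟩
  rw [hgrad.gradient, hH, hGv, map_neg]
  have hinv : Matrix.toEuclideanCLM (𝕜 := ℝ) ((Hmat η)⁻¹)
      (Matrix.toEuclideanCLM (𝕜 := ℝ) (Hmat η) (etaCoord q - η)) = etaCoord q - η := by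
    have hmul := Matrix.nonsing_inv_mul (Hmat η) ((Matrix.isUnit_iff_isUnit_det _).mp hpd.isUnit)
    calc Matrix.toEuclideanCLM (𝕜 := ℝ) ((Hmat η)⁻¹)
          (Matrix.toEuclideanCLM (𝕜 := ℝ) (Hmat η) (etaCoord q - η))
        = (Matrix.toEuclideanCLM (𝕜 := ℝ) ((Hmat η)⁻¹)
            * Matrix.toEuclideanCLM (𝕜 := ℝ) (Hmat η)) (etaCoord q - η) := rfl
      _ = Matrix.toEuclideanCLM (𝕜 := ℝ) ((Hmat η)⁻¹ * Hmat η) (etaCoord q - η) := by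
          rw [map_mul]
      _ = etaCoord q - η := by rw [hmul, map_one, ContinuousLinearMap.one_apply]
  rw [hinv, neg_sub]

end
end
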